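/- arXiv:2012.02009 — 4 statements merged into one kernel-verified Lean document; each statement's English description precedes it below -/
import Mathlib

section
/- Let λ_1,…,λ_m > 0 and let N_1,…,N_m ≥ 0 satisfy Σ N_i = S for a fixed S > 0. Then the quantity Σ_{i=1}^m [N_i/λ_i − ln(1 + N_i/λ_i)] is minimized uniquely at N_i = ζλ_i²/(1 − ζλ_i), where ζ ∈ (0, min_i 1/λ_i) is the unique constant with Σ_i ζλ_i²/(1 − ζλ_i) = S. -/
lemma aux_pos (p q : ℝ) (hp : 0 < p) (hq : 0 < q) :
    0 ≤ (p - q) / q - Real.log (p / q) := by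
  have h := Real.log_le_sub_one_of_pos (div_pos hp hq)
  have h2 : (p - q) / q = p / q - 1 := by field_simp
  linarith

lemma aux_eq (p q : ℝ) (hp : 0 < p) (hq : 0 < q) :
    (p - q) / q - Real.log (p / q) = 0 ↔ p = q := by
  constructor
  · intro h
    by_contra hne
    have hr : p / q ≠ 1 := by
      intro h1
      rw [div_eq_iff hq.ne', one_mul] at h1
      exact hne h1
    have h1 := Real.log_lt_sub_one_of_pos (div_pos hp hq) hr
    have h2 : (p - q) / q = p / q - 1 := by field_simp
    linarith
  · intro h; subst h; simp [div_self hq.ne']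

lemma key (lam ζ N : ℝ) (hl : 0 < lam) (hz : 0 < ζ) (hzl : ζ * lam < 1) (hN : 0 ≤ N) :
    0 ≤ (N / lam - Real.log (1 + N / lam))
        - (ζ * lam ^ 2 / (1 - ζ * lam) / lam
            - Real.log (1 + ζ * lam ^ 2 / (1 - ζ * lam) / lam))
        - ζ * (N - ζ * lam ^ 2 / (1 - ζ * lam)) ∧
    ((N / lam - Real.log (1 + N / lam))
        - (ζ * lam ^ 2 / (1 - ζ * lam) / lam
            - Real.log (1 + ζ * lam ^ 2 / (1 - ζ * lam) / lam))
        - ζ * (N - ζ * lam ^ 2 / (1 - ζ * lam)) = 0 ↔ N = ζ * lam ^ 2 / (1 - ζ * lam)) := by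
  have hd : 0 < 1 - ζ * lam := by linarith
  set a : ℝ := ζ * lam ^ 2 / (1 - ζ * lam) with ha
  have ha0 : 0 ≤ a := by positivity
  set p : ℝ := 1 + N / lam with hpdef
  set q : ℝ := 1 + a / lam with hqdef
  have hp : 0 < p := by
    have h1 : 0 ≤ N / lam := by positivity
    simp only [hpdef]; linarith
  have hq : 0 < q := by
    have h1 : 0 ≤ a / lam := by positivity
    simp only [hqdef]; linarith
  have hlog : Real.log (p / q) = Real.log p - Real.log q := Real.log_div hp.ne' hq.ne'
  have hid : (p - q) / q = N / lam - a / lam - ζ * (N - a) := by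
    simp only [hpdef, hqdef, ha]
    have h1 : (1 + ζ * lam ^ 2 / (1 - ζ * lam) / lam) = 1 / (1 - ζ * lam) := by
      field_simp; ring
    have h2 : ζ * lam ^ 2 / (1 - ζ * lam) / lam = ζ * lam / (1 - ζ * lam) := by
      field_simp
    rw [h1, h2]
    have h3 : ζ * lam ^ 2 / (1 - ζ * lam) = lam * (ζ * lam / (1 - ζ * lam)) := by ring
    rw [h3]
    set d := 1 - ζ * lam with hd'
    have hz : ζ * lam = 1 - d := by rw [hd']; ring
    rw [hz]
    field_simp
    linear_combination (-N) * hz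
  have hE : (N / lam - Real.log (1 + N / lam))
        - (a / lam - Real.log (1 + a / lam)) - ζ * (N - a)
      = (p - q) / q - Real.log (p / q) := by
    rw [hlog, hid, hpdef, hqdef]; ring
  constructor
  · rw [hE]; exact aux_pos p q hp hq
  · rw [hE, aux_eq p q hp hq]
    constructor
    · intro h
      have : N / lam = a / lam := by
        have := h; simp only [hpdef, hqdef] at this; linarith
      field_simp at this; exact this
    · intro h; simp only [hpdef, hqdef, h]

theorem stmt3 (m : ℕ) (hm : 0 < m) (lam : Fin m → ℝ) (hlam : ∀ i, 0 < lam i)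
    (S : ℝ) (hS : 0 < S) (ζ : ℝ)
    (hζ0 : 0 < ζ) (hζ1 : ∀ i, ζ < 1 / lam i)
    (hζsum : ∑ i, ζ * (lam i) ^ 2 / (1 - ζ * lam i) = S)
    (N : Fin m → ℝ) (hN : ∀ i, 0 ≤ N i) (hNsum : ∑ i, N i = S) :
    (∑ i, (ζ * (lam i) ^ 2 / (1 - ζ * lam i) / lam i
        - Real.log (1 + ζ * (lam i) ^ 2 / (1 - ζ * lam i) / lam i)))
      ≤ ∑ i, (N i / lam i - Real.log (1 + N i / lam i)) ∧
    ((∑ i, (N i / lam i - Real.log (1 + N i / lam i)))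
        = ∑ i, (ζ * (lam i) ^ 2 / (1 - ζ * lam i) / lam i
        - Real.log (1 + ζ * (lam i) ^ 2 / (1 - ζ * lam i) / lam i))
      ↔ ∀ i, N i = ζ * (lam i) ^ 2 / (1 - ζ * lam i)) := by
  have hzl : ∀ i, ζ * lam i < 1 := fun i => (lt_div_iff₀ (hlam i)).mp (hζ1 i)
  set A : Fin m → ℝ := fun i => ζ * (lam i) ^ 2 / (1 - ζ * lam i) with hA
  set fN : Fin m → ℝ := fun i => N i / lam i - Real.log (1 + N i / lam i) with hfN
  set fA : Fin m → ℝ := fun i => A i / lam i - Real.log (1 + A i / lam i) with hfA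
  set E : Fin m → ℝ := fun i => fN i - fA i - ζ * (N i - A i) with hE
  have hkey : ∀ i, 0 ≤ E i ∧ (E i = 0 ↔ N i = A i) :=
    fun i => key (lam i) ζ (N i) (hlam i) hζ0 (hzl i) (hN i)
  have hAsum : ∑ i, A i = S := hζsum
  have h0 : ∑ i, (N i - A i) = 0 := by
    rw [Finset.sum_sub_distrib, hNsum, hAsum, sub_self]
  have hEsum : ∑ i, E i = (∑ i, fN i) - ∑ i, fA i := by
    simp only [hE]
    rw [Finset.sum_sub_distrib, Finset.sum_sub_distrib, ← Finset.mul_sum, h0,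
      mul_zero, sub_zero]
  have hEnn : 0 ≤ ∑ i, E i := Finset.sum_nonneg fun i _ => (hkey i).1
  constructor
  · have : (∑ i, fA i) ≤ ∑ i, fN i := by linarith [hEsum ▸ hEnn]
    exact this
  · constructor
    · intro h
      have hz : ∑ i, E i = 0 := by rw [hEsum, h, sub_self]
      have := (Finset.sum_eq_zero_iff_of_nonneg fun i _ => (hkey i).1).mp hz
      exact fun i => (hkey i).2.mp (this i (Finset.mem_univ i))
    · intro h
      have : ∀ i, fN i = fA i := by
        intro i; simp only [hfN, hfA, hA, h i]
      exact Finset.sum_congr rfl fun i _ => this i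
end

section
/- Let A be a real symmetric positive semidefinite m×m matrix and Λ = diag(λ_1,…,λ_m) with all λ_i > 0. Then tr((A + Λ)Λ⁻¹) − ln det((A + Λ)Λ⁻¹) ≥ Σ_{i=1}^m [(a_ii + λ_i)/λ_i − ln((a_ii + λ_i)/λ_i)], where a_ii are the diagonal entries of A, with equality if A is diagonal. -/
open Matrix Finset

lemma diag_pos_of_posDef {n : Type*} [Fintype n] [DecidableEq n] {M : Matrix n n ℝ}
    (hM : M.PosDef) (i : n) : 0 < M i i := by
  exact hM.diag_pos

lemma posDef_diag_conj {n : Type*} [Fintype n] [DecidableEq n] {M : Matrix n n ℝ}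
    (hM : M.PosDef) (d : n → ℝ) (hd : ∀ i, d i ≠ 0) :
    (Matrix.diagonal d * M * Matrix.diagonal d).PosDef := by
  rw [Matrix.posDef_iff_dotProduct_mulVec] at hM ⊢
  constructor
  · rw [Matrix.IsHermitian, conjTranspose_mul, conjTranspose_mul, diagonal_conjTranspose]
    simp only [star_trivial, Pi.star_def, hM.1.eq, mul_assoc]
  · intro x hx
    have hy : Matrix.diagonal d *ᵥ x ≠ 0 := by
      intro h
      apply hx
      funext i
      have := congrFun h i
      simp [Matrix.mulVec_diagonal] at this
      rcases this with h' | h'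
      · exact absurd h' (hd i)
      · exact h'
    have key : star x ⬝ᵥ ((Matrix.diagonal d * M * Matrix.diagonal d) *ᵥ x)
        = star (Matrix.diagonal d *ᵥ x) ⬝ᵥ (M *ᵥ (Matrix.diagonal d *ᵥ x)) := by
      simp only [star_trivial, ← Matrix.mulVec_mulVec]
      rw [Matrix.dotProduct_mulVec x (Matrix.diagonal d)]
      congr 1
      funext i; simp [Matrix.vecMul_diagonal, Matrix.mulVec_diagonal, mul_comm]
    rw [key]
    exact hM.2 hy

lemma trace_eq_sum_eigenvalues' {n : Type*} [Fintype n] [DecidableEq n] {B : Matrix n n ℝ}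
    (hB : B.IsHermitian) : B.trace = ∑ i, hB.eigenvalues i := by
  simpa using hB.trace_eq_sum_eigenvalues

lemma hadamard_det_le {n : Type*} [Fintype n] [DecidableEq n] {M : Matrix n n ℝ}
    (hM : M.PosDef) : M.det ≤ ∏ i, M i i := by
  have hdiag : ∀ i, 0 < M i i := diag_pos_of_posDef hM
  set d : n → ℝ := fun i => (Real.sqrt (M i i))⁻¹ with hd_def
  have hdpos : ∀ i, 0 < d i := fun i => inv_pos.mpr (Real.sqrt_pos.mpr (hdiag i))
  have hd : ∀ i, d i ≠ 0 := fun i => (hdpos i).ne'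
  set B := Matrix.diagonal d * M * Matrix.diagonal d with hB_def
  have hB : B.PosDef := posDef_diag_conj hM d hd
  have hBdiag : ∀ i, B i i = 1 := by
    intro i
    have h1 : B i i = d i * M i i * d i := by
      rw [hB_def, Matrix.mul_diagonal, Matrix.diagonal_mul]
    rw [h1, hd_def]
    field_simp
    rw [Real.sq_sqrt (hdiag i).le, div_self (hdiag i).ne']
  -- trace B = card n
  have htr : B.trace = (Fintype.card n : ℝ) := by
    rw [Matrix.trace]
    simp [Matrix.diag, hBdiag, Finset.card_univ]
  have htr2 : ∑ i, hB.1.eigenvalues i = (Fintype.card n : ℝ) := by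
    rw [← trace_eq_sum_eigenvalues' hB.1, htr]
  have hev : ∀ i, 0 < hB.1.eigenvalues i := hB.eigenvalues_pos
  -- det B ≤ 1
  have hdetB : B.det ≤ 1 := by
    have hdB : B.det = ∏ i, hB.1.eigenvalues i := by
      have := hB.1.det_eq_prod_eigenvalues
      simpa using this
    have hlog : Real.log B.det ≤ 0 := by
      rw [hdB, Real.log_prod (fun i _ => (hev i).ne')]
      calc ∑ i, Real.log (hB.1.eigenvalues i) ≤ ∑ i, (hB.1.eigenvalues i - 1) :=
            Finset.sum_le_sum fun i _ => Real.log_le_sub_one_of_pos (hev i)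
        _ = 0 := by rw [Finset.sum_sub_distrib, htr2]; simp
    exact (Real.log_nonpos_iff hB.det_pos.le).mp hlog
  -- relate det B and det M
  have hdd : B.det = M.det * (∏ i, M i i)⁻¹ := by
    rw [hB_def, Matrix.det_mul, Matrix.det_mul, Matrix.det_diagonal]
    have : ∏ i, d i = (∏ i, Real.sqrt (M i i))⁻¹ := by
      rw [hd_def, ← Finset.prod_inv_distrib]
    rw [this]
    have hs : (∏ i, Real.sqrt (M i i)) * (∏ i, Real.sqrt (M i i)) = ∏ i, M i i := by
      rw [← Finset.prod_mul_distrib]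
      exact Finset.prod_congr rfl fun i _ => Real.mul_self_sqrt (hdiag i).le
    field_simp
    rw [sq, hs]
  have hprodpos : 0 < ∏ i, M i i := Finset.prod_pos fun i _ => hdiag i
  have := hdd ▸ hdetB
  calc M.det = M.det * (∏ i, M i i)⁻¹ * (∏ i, M i i) := by field_simp
    _ ≤ 1 * (∏ i, M i i) := by
        apply mul_le_mul_of_nonneg_right this hprodpos.le
    _ = ∏ i, M i i := one_mul _

theorem stmt6 (m : ℕ) (A : Matrix (Fin m) (Fin m) ℝ) (hA : A.PosSemidef)
    (lam : Fin m → ℝ) (hlam : ∀ i, 0 < lam i) :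
    (∑ i, ((A i i + lam i) / lam i - Real.log ((A i i + lam i) / lam i))) ≤
      ((A + Matrix.diagonal lam) * (Matrix.diagonal lam)⁻¹).trace
        - Real.log (((A + Matrix.diagonal lam) * (Matrix.diagonal lam)⁻¹).det) ∧
    (A = Matrix.diagonal (fun i => A i i) →
      ((A + Matrix.diagonal lam) * (Matrix.diagonal lam)⁻¹).trace
          - Real.log (((A + Matrix.diagonal lam) * (Matrix.diagonal lam)⁻¹).det)
        = ∑ i, ((A i i + lam i) / lam i - Real.log ((A i i + lam i) / lam i))) := by
  have hD : (Matrix.diagonal lam).PosDef := Matrix.posDef_diagonal_iff.mpr hlam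
  have hM : (A + Matrix.diagonal lam).PosDef := Matrix.PosDef.posSemidef_add hA hD
  have hMdiag : ∀ i, (A + Matrix.diagonal lam) i i = A i i + lam i := by
    intro i; simp [Matrix.add_apply]
  have hpos : ∀ i, 0 < A i i + lam i := fun i => hMdiag i ▸ diag_pos_of_posDef hM i
  have hinv : (Matrix.diagonal lam)⁻¹ = Matrix.diagonal (fun i => (lam i)⁻¹) := by
    refine Matrix.inv_eq_right_inv ?_
    rw [Matrix.diagonal_mul_diagonal,
      show (fun i => lam i * (lam i)⁻¹) = fun _ => (1:ℝ) from
        funext fun i => mul_inv_cancel₀ (hlam i).ne', Matrix.diagonal_one]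
  have htr : ((A + Matrix.diagonal lam) * (Matrix.diagonal lam)⁻¹).trace
      = ∑ i, (A i i + lam i) / lam i := by
    rw [hinv, Matrix.trace]
    apply Finset.sum_congr rfl
    intro i _
    simp [Matrix.diag, Matrix.mul_diagonal, hMdiag i, div_eq_mul_inv]
  have hprodlam : 0 < ∏ i, lam i := Finset.prod_pos fun i _ => hlam i
  have hdet : ((A + Matrix.diagonal lam) * (Matrix.diagonal lam)⁻¹).det
      = (A + Matrix.diagonal lam).det * (∏ i, lam i)⁻¹ := by
    rw [hinv, Matrix.det_mul, Matrix.det_diagonal, ← Finset.prod_inv_distrib]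
  have hdetpos := hM.det_pos
  have hlogdet : Real.log (((A + Matrix.diagonal lam) * (Matrix.diagonal lam)⁻¹).det)
      = Real.log (A + Matrix.diagonal lam).det - ∑ i, Real.log (lam i) := by
    rw [hdet, Real.log_mul hdetpos.ne' (inv_ne_zero hprodlam.ne'), Real.log_inv,
      Real.log_prod fun i _ => (hlam i).ne']
    ring
  constructor
  · rw [htr, hlogdet]
    have hlogdiv : ∀ i ∈ Finset.univ, (A i i + lam i) / lam i
        - Real.log ((A i i + lam i) / lam i)
        = (A i i + lam i) / lam i - (Real.log (A i i + lam i) - Real.log (lam i)) :=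
      fun i _ => by rw [Real.log_div (hpos i).ne' (hlam i).ne']
    rw [Finset.sum_congr rfl hlogdiv, Finset.sum_sub_distrib, Finset.sum_sub_distrib]
    have key : Real.log (A + Matrix.diagonal lam).det ≤ ∑ i, Real.log (A i i + lam i) := by
      have h1 : (A + Matrix.diagonal lam).det ≤ ∏ i, (A i i + lam i) := by
        have := hadamard_det_le hM
        calc (A + Matrix.diagonal lam).det ≤ ∏ i, (A + Matrix.diagonal lam) i i := this
          _ = ∏ i, (A i i + lam i) := Finset.prod_congr rfl fun i _ => hMdiag i
      have h2 : 0 < ∏ i, (A i i + lam i) := Finset.prod_pos fun i _ => hpos i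
      calc Real.log (A + Matrix.diagonal lam).det ≤ Real.log (∏ i, (A i i + lam i)) :=
            (Real.log_le_log_iff hdetpos h2).mpr h1
        _ = ∑ i, Real.log (A i i + lam i) := Real.log_prod fun i _ => (hpos i).ne'
    linarith
  · intro hAe
    have hsum : A + Matrix.diagonal lam = Matrix.diagonal (fun i => A i i + lam i) := by
      nth_rewrite 1 [hAe]
      rw [Matrix.diagonal_add]
    rw [hsum, hinv, Matrix.diagonal_mul_diagonal, Matrix.trace_diagonal, Matrix.det_diagonal,
      Real.log_prod (fun i _ => (mul_pos (hpos i) (inv_pos.mpr (hlam i))).ne'),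
      ← Finset.sum_sub_distrib]
    apply Finset.sum_congr rfl
    intro i _
    rw [div_eq_mul_inv]
end

section
/- Let Σ_y and Σ_n be real symmetric positive definite and positive semidefinite m×m matrices, and define F(Σ_n) = tr((Σ_n + Σ_y)Σ_y⁻¹) − ln det((Σ_n + Σ_y)Σ_y⁻¹) − m. Then F(Σ_n) ≥ 0 and F is monotone in the sense that if Σ_n' − Σ_n is positive semidefinite then F(Σ_n') ≥ F(Σ_n). -/
open Matrix
open scoped MatrixOrder

section Aux

variable {m : ℕ}

private lemma herm_trace_eq' {N : Matrix (Fin m) (Fin m) ℝ} (h : N.IsHermitian) :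
    N.trace = ∑ i, h.eigenvalues i := by
  rw [h.trace_eq_sum_eigenvalues]
  simp

private lemma logdet_le' {N : Matrix (Fin m) (Fin m) ℝ} (hN : N.PosDef) :
    Real.log N.det ≤ N.trace - m := by
  have h := hN.isHermitian
  have hev : ∀ i, 0 < h.eigenvalues i := hN.eigenvalues_pos
  rw [h.det_eq_prod_eigenvalues, herm_trace_eq' h]
  simp only [RCLike.ofReal_real_eq_id, id_eq]
  rw [Real.log_prod (fun i _ => (hev i).ne')]
  calc ∑ i, Real.log (h.eigenvalues i) ≤ ∑ i, (h.eigenvalues i - 1) :=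
        Finset.sum_le_sum fun i _ => Real.log_le_sub_one_of_pos (hev i)
    _ = _ := by rw [Finset.sum_sub_distrib]; simp

private lemma psd_trace_nonneg' {P : Matrix (Fin m) (Fin m) ℝ} (hP : P.PosSemidef) :
    0 ≤ P.trace := by
  rw [Matrix.trace]
  refine Finset.sum_nonneg fun i _ => ?_
  exact hP.diag_nonneg

set_option maxHeartbeats 1000000 in
private lemma trace_mul_psd_nonneg' {D E : Matrix (Fin m) (Fin m) ℝ}
    (hD : D.PosSemidef) (hE : E.PosSemidef) : 0 ≤ (D * E).trace := by
  have h1 : D * E = D * CFC.sqrt E * CFC.sqrt E := by rw [mul_assoc, CFC.sqrt_mul_sqrt_self E hE.nonneg]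
  rw [h1, Matrix.trace_mul_cycle]
  have hPS : (CFC.sqrt E * D * (CFC.sqrt E)ᴴ).PosSemidef := hD.mul_mul_conjTranspose_same _
  rw [(CFC.sqrt_nonneg E).posSemidef.isHermitian] at hPS
  exact psd_trace_nonneg' hPS

private lemma posDef_psd_add' {A B : Matrix (Fin m) (Fin m) ℝ} (hA : A.PosSemidef)
    (hB : B.PosDef) : (A + B).PosDef := by
  refine Matrix.PosDef.of_dotProduct_mulVec_pos (hA.isHermitian.add hB.isHermitian) fun x hx => ?_
  have h1 := hA.dotProduct_mulVec_nonneg x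
  have h2 := hB.dotProduct_mulVec_pos hx
  rw [add_mulVec, dotProduct_add]
  exact add_pos_of_nonneg_of_pos h1 h2

private lemma herm_dot'' {A : Matrix (Fin m) (Fin m) ℝ} (hA : A.IsHermitian) (u v : Fin m → ℝ) :
    u ⬝ᵥ (A *ᵥ v) = (A *ᵥ u) ⬝ᵥ v := by
  have ht : Aᵀ = A := by rw [← Matrix.conjTranspose_eq_transpose_of_trivial]; exact hA
  rw [Matrix.dotProduct_mulVec, ← Matrix.mulVec_transpose, ht]

private lemma inv_sub_inv_psd' {A B : Matrix (Fin m) (Fin m) ℝ}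
    (hA : A.PosDef) (hB : B.PosDef) (hAB : (B - A).PosSemidef) :
    (A⁻¹ - B⁻¹).PosSemidef := by
  have hdA : IsUnit A.det := isUnit_iff_ne_zero.mpr hA.det_pos.ne'
  have hdB : IsUnit B.det := isUnit_iff_ne_zero.mpr hB.det_pos.ne'
  refine Matrix.PosSemidef.of_dotProduct_mulVec_nonneg ((hA.inv.isHermitian).sub (hB.inv.isHermitian)) fun x => ?_
  set z := B⁻¹ *ᵥ x with hz
  set w := A⁻¹ *ᵥ x with hw
  have hAw : A *ᵥ w = x := by
    rw [hw, Matrix.mulVec_mulVec, Matrix.mul_nonsing_inv _ hdA, Matrix.one_mulVec]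
  have hBz : B *ᵥ z = x := by
    rw [hz, Matrix.mulVec_mulVec, Matrix.mul_nonsing_inv _ hdB, Matrix.one_mulVec]
  have key : (star x) ⬝ᵥ ((A⁻¹ - B⁻¹) *ᵥ x)
      = (z - w) ⬝ᵥ (A *ᵥ (z - w)) + z ⬝ᵥ ((B - A) *ᵥ z) := by
    simp only [star_trivial, Matrix.sub_mulVec, Matrix.mulVec_sub, dotProduct_sub,
      sub_dotProduct, hAw, hBz]
    have e1 : z ⬝ᵥ (A *ᵥ w) = (A *ᵥ z) ⬝ᵥ w := herm_dot'' hA.isHermitian z w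
    have e2 : w ⬝ᵥ (A *ᵥ z) = (A *ᵥ w) ⬝ᵥ z := herm_dot'' hA.isHermitian w z
    have e3 : x ⬝ᵥ w = w ⬝ᵥ x := dotProduct_comm x w
    have e4 : x ⬝ᵥ z = z ⬝ᵥ x := dotProduct_comm x z
    have e5 : (A *ᵥ w) ⬝ᵥ z = x ⬝ᵥ z := by rw [hAw]
    have e6 : w ⬝ᵥ (A *ᵥ w) = w ⬝ᵥ x := by rw [hAw]
    rw [e1, e2] at *
    linarith [e3, e4, e5, e6]
  rw [key]
  have h1 : (0:ℝ) ≤ (z - w) ⬝ᵥ (A *ᵥ (z - w)) := by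
    have := hA.posSemidef.dotProduct_mulVec_nonneg (z - w); simpa using this
  have h2 : (0:ℝ) ≤ z ⬝ᵥ ((B - A) *ᵥ z) := by
    have := hAB.dotProduct_mulVec_nonneg z; simpa using this
  linarith

private lemma posDef_conj' {A C : Matrix (Fin m) (Fin m) ℝ} (hA : A.PosDef) (hC : C.IsHermitian)
    (hdet : IsUnit C.det) : (C * A * C).PosDef := by
  have hherm : (C * A * C).IsHermitian := by
    have := Matrix.isHermitian_mul_mul_conjTranspose C hA.isHermitian
    rwa [hC] at this
  refine Matrix.PosDef.of_dotProduct_mulVec_pos hherm fun x hx => ?_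
  have hCx : C *ᵥ x ≠ 0 := by
    intro h
    apply hx
    have : C⁻¹ *ᵥ (C *ᵥ x) = x := by
      rw [Matrix.mulVec_mulVec, Matrix.nonsing_inv_mul _ hdet, Matrix.one_mulVec]
    rw [h, Matrix.mulVec_zero] at this
    exact this.symm
  have := hA.dotProduct_mulVec_pos hCx
  calc (0:ℝ) < (star (C *ᵥ x)) ⬝ᵥ (A *ᵥ (C *ᵥ x)) := this
    _ = (star x) ⬝ᵥ ((C * A * C) *ᵥ x) := by
        simp only [star_trivial, ← Matrix.mulVec_mulVec]
        exact (herm_dot'' hC x _).symm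

set_option maxHeartbeats 1000000 in
private lemma key_ineq' {S D : Matrix (Fin m) (Fin m) ℝ} (hS : S.PosDef) (hD : D.PosSemidef) :
    Real.log (((D + S) * S⁻¹).det) ≤ (D * S⁻¹).trace := by
  have hdS : IsUnit S.det := isUnit_iff_ne_zero.mpr hS.det_pos.ne'
  set s := CFC.sqrt S with hs_def
  have hs : s * s = S := CFC.sqrt_mul_sqrt_self S hS.posSemidef.nonneg
  have hsh : s.IsHermitian := (CFC.sqrt_nonneg S).posSemidef.isHermitian
  have hdets : s.det ≠ 0 := by
    intro h
    apply hS.det_pos.ne'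
    rw [← hs, Matrix.det_mul, h, zero_mul]
  have hsinv_h : (s⁻¹).IsHermitian := by
    rw [Matrix.IsHermitian, Matrix.conjTranspose_nonsing_inv, hsh]
  have hsinv_det : IsUnit (s⁻¹).det := by
    rw [Matrix.det_nonsing_inv]
    exact isUnit_iff_ne_zero.mpr (by simp [Ring.inverse_eq_inv', hdets])
  have hDS : (D + S).PosDef := posDef_psd_add' hD hS
  have hN : (s⁻¹ * (D + S) * s⁻¹).PosDef := posDef_conj' hDS hsinv_h hsinv_det
  have hinv2 : s⁻¹ * s⁻¹ = S⁻¹ := by rw [← Matrix.mul_inv_rev, hs]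
  have hNtr : (s⁻¹ * (D + S) * s⁻¹).trace = ((D + S) * S⁻¹).trace := by
    rw [Matrix.trace_mul_cycle, hinv2, Matrix.trace_mul_comm]
  have hNdet : (s⁻¹ * (D + S) * s⁻¹).det = ((D + S) * S⁻¹).det := by
    rw [Matrix.det_mul, Matrix.det_mul, Matrix.det_mul, ← hinv2, Matrix.det_mul]
    ring
  have hkey := logdet_le' hN
  rw [hNdet, hNtr] at hkey
  have htr : ((D + S) * S⁻¹).trace = (D * S⁻¹).trace + m := by
    rw [add_mul, Matrix.trace_add, Matrix.mul_nonsing_inv _ hdS, Matrix.trace_one]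
    simp
  linarith

end Aux

theorem stmt9 (m : ℕ) (Sy : Matrix (Fin m) (Fin m) ℝ) (hy : Sy.PosDef)
    (F : Matrix (Fin m) (Fin m) ℝ → ℝ)
    (hF : ∀ Sn, F Sn = ((Sn + Sy) * Sy⁻¹).trace
        - Real.log (((Sn + Sy) * Sy⁻¹).det) - m) :
    (∀ Sn : Matrix (Fin m) (Fin m) ℝ, Sn.PosSemidef → 0 ≤ F Sn) ∧
    (∀ Sn Sn' : Matrix (Fin m) (Fin m) ℝ, Sn.PosSemidef →
      (Sn' - Sn).PosSemidef → F Sn ≤ F Sn') := by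
  have hdSy : IsUnit Sy.det := isUnit_iff_ne_zero.mpr hy.det_pos.ne'
  have htr : ∀ Sn : Matrix (Fin m) (Fin m) ℝ,
      ((Sn + Sy) * Sy⁻¹).trace = (Sn * Sy⁻¹).trace + m := by
    intro Sn
    rw [add_mul, Matrix.trace_add, Matrix.mul_nonsing_inv _ hdSy, Matrix.trace_one]
    simp
  constructor
  · intro Sn hSn
    rw [hF, htr]
    have := key_ineq' hy hSn
    linarith
  · intro Sn Sn' hSn hD
    rw [hF, hF, htr, htr]
    set B := Sn + Sy with hB_def
    have hB : B.PosDef := posDef_psd_add' hSn hy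
    have hdB : IsUnit B.det := isUnit_iff_ne_zero.mpr hB.det_pos.ne'
    set D := Sn' - Sn with hD_def
    -- trace difference
    have htrd : (Sn' * Sy⁻¹).trace - (Sn * Sy⁻¹).trace = (D * Sy⁻¹).trace := by
      rw [← Matrix.trace_sub, ← Matrix.sub_mul]
    -- determinant positivity
    have hdet1 : 0 < ((Sn + Sy) * Sy⁻¹).det := by
      rw [Matrix.det_mul, Matrix.det_nonsing_inv, Ring.inverse_eq_inv']
      exact mul_pos hB.det_pos (inv_pos.mpr hy.det_pos)
    have hSn'Sy : (Sn' + Sy).PosDef := by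
      have : Sn' + Sy = D + B := by rw [hD_def, hB_def]; abel
      rw [this]
      exact posDef_psd_add' hD hB
    have hdet2 : 0 < ((Sn' + Sy) * Sy⁻¹).det := by
      rw [Matrix.det_mul, Matrix.det_nonsing_inv, Ring.inverse_eq_inv']
      exact mul_pos hSn'Sy.det_pos (inv_pos.mpr hy.det_pos)
    -- log difference
    have hlog : Real.log (((Sn' + Sy) * Sy⁻¹).det) - Real.log (((Sn + Sy) * Sy⁻¹).det)
        = Real.log (((D + B) * B⁻¹).det) := by
      rw [← Real.log_div hdet2.ne' hdet1.ne']
      congr 1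
      have h1 : D + B = Sn' + Sy := by rw [hD_def, hB_def]; abel
      rw [h1, Matrix.det_mul, Matrix.det_mul, Matrix.det_mul, Matrix.det_nonsing_inv,
        Matrix.det_nonsing_inv, Ring.inverse_eq_inv']
      have hBs : B.det = (Sn + Sy).det := by rw [hB_def]
      rw [hBs]
      have h2 : Sy.det ≠ 0 := hy.det_pos.ne'
      have h3 : (Sn + Sy).det ≠ 0 := hB_def ▸ hB.det_pos.ne'
      field_simp
    have hkey := key_ineq' hB hD
    -- trace comparison
    have hinv : (Sy⁻¹ - B⁻¹).PosSemidef := by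
      apply inv_sub_inv_psd' hy hB
      have : B - Sy = Sn := by rw [hB_def]; abel
      rw [this]; exact hSn
    have htc : 0 ≤ (D * (Sy⁻¹ - B⁻¹)).trace := trace_mul_psd_nonneg' hD hinv
    rw [Matrix.mul_sub, Matrix.trace_sub] at htc
    linarith
end

section
/- Let S_y : [0, 2π] → ℝ be continuous and strictly positive, fix D' > 0, and let ζ ∈ (0, 1/max_ω S_y(ω)) satisfy (1/2π)∫_0^{2π} ζS_y(ω)²/(1 − ζS_y(ω)) dω = D'. Then among all continuous S_n̂ ≥ 0 with (1/2π)∫_0^{2π} S_n̂(ω) dω ≥ D', the functional (1/2π)∫_0^{2π}(1/2)[S_n̂(ω)/S_y(ω) − ln(1 + S_n̂(ω)/S_y(ω))] dω is minimized by S_n̂*(ω) = ζS_y(ω)²/(1 − ζS_y(ω)). -/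
open Real

lemma key14 (S a z : ℝ) (hS : 0 < S) (ha : 0 ≤ a) (hzS : z * S < 1) :
    (1/2) * ((z * S ^ 2 / (1 - z * S)) / S - Real.log (1 + (z * S ^ 2 / (1 - z * S)) / S))
      + (z / 2) * (a - z * S ^ 2 / (1 - z * S))
      ≤ (1/2) * (a / S - Real.log (1 + a / S)) := by
  have hr : 0 < 1 - z * S := by linarith
  have hx : (z * S ^ 2 / (1 - z * S)) / S = z * S / (1 - z * S) := by
    field_simp
  have h1 : 1 + z * S / (1 - z * S) = 1 / (1 - z * S) := by field_simp; ring
  have hposA : 0 < 1 + a / S := by positivity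
  have hkey : Real.log ((1 + a / S) * (1 - z * S)) ≤ (1 + a / S) * (1 - z * S) - 1 :=
    Real.log_le_sub_one_of_pos (by positivity)
  have hlogmul : Real.log ((1 + a / S) * (1 - z * S))
      = Real.log (1 + a / S) + Real.log (1 - z * S) :=
    Real.log_mul (ne_of_gt hposA) (ne_of_gt hr)
  have hlog1 : Real.log (1 / (1 - z * S)) = - Real.log (1 - z * S) := by
    rw [Real.log_div one_ne_zero (ne_of_gt hr), Real.log_one]; ring
  rw [hx, h1, hlog1]
  have h2 : Real.log (1 + a / S) ≤ (1 + a / S) * (1 - z * S) - 1 - Real.log (1 - z * S) := by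
    linarith
  have hid : (1/2) * (z * S / (1 - z * S)) + (z/2) * (a - z * S ^ 2 / (1 - z * S))
      = (1/2) * (a / S) - (1/2) * ((1 + a / S) * (1 - z * S) - 1) := by
    field_simp; ring
  linarith

theorem stmt14 (Sy : ℝ → ℝ)
    (hSy : ContinuousOn Sy (Set.Icc 0 (2 * π)))
    (hpos : ∀ ω ∈ Set.Icc 0 (2 * π), 0 < Sy ω)
    (M : ℝ) (hM : IsGreatest (Sy '' Set.Icc 0 (2 * π)) M)
    (D' : ℝ) (hD' : 0 < D')
    (ζ : ℝ) (hζ : ζ ∈ Set.Ioo 0 (1 / M))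
    (hζeq : (1 / (2 * π)) * ∫ ω in (0:ℝ)..(2 * π),
        ζ * (Sy ω) ^ 2 / (1 - ζ * Sy ω) = D') :
    ∀ Sn : ℝ → ℝ, ContinuousOn Sn (Set.Icc 0 (2 * π)) →
      (∀ ω ∈ Set.Icc 0 (2 * π), 0 ≤ Sn ω) →
      D' ≤ (1 / (2 * π)) * ∫ ω in (0:ℝ)..(2 * π), Sn ω →
      (1 / (2 * π)) * ∫ ω in (0:ℝ)..(2 * π),
          (1 / 2) * ((ζ * (Sy ω) ^ 2 / (1 - ζ * Sy ω)) / Sy ω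
            - Real.log (1 + (ζ * (Sy ω) ^ 2 / (1 - ζ * Sy ω)) / Sy ω))
        ≤ (1 / (2 * π)) * ∫ ω in (0:ℝ)..(2 * π),
          (1 / 2) * (Sn ω / Sy ω - Real.log (1 + Sn ω / Sy ω)) := by
  intro Sn hSnc hSnn hSnD
  have hπ : (0:ℝ) < π := pi_pos
  have hT : (0:ℝ) ≤ 2 * π := by linarith
  have huIcc : Set.uIcc (0:ℝ) (2 * π) = Set.Icc 0 (2 * π) := Set.uIcc_of_le hT
  have hMpos : 0 < M := by
    obtain ⟨ω0, h0, hval⟩ := hM.1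
    exact hval ▸ hpos ω0 h0
  have hzS : ∀ ω ∈ Set.Icc 0 (2 * π), ζ * Sy ω < 1 := by
    intro ω h
    have h1 : Sy ω ≤ M := hM.2 ⟨ω, h, rfl⟩
    have h2 : ζ * M < 1 := (lt_div_iff₀ hMpos).mp hζ.2
    nlinarith [hζ.1]
  have hr : ∀ ω ∈ Set.Icc 0 (2 * π), 0 < 1 - ζ * Sy ω := by
    intro ω h; linarith [hzS ω h]
  -- the optimal perturbation spectrum
  set star : ℝ → ℝ := fun ω => ζ * Sy ω ^ 2 / (1 - ζ * Sy ω) with hstar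
  have hstarc : ContinuousOn star (Set.Icc 0 (2 * π)) :=
    (continuousOn_const.mul (hSy.pow 2)).div
      (continuousOn_const.sub (continuousOn_const.mul hSy))
      (fun ω h => ne_of_gt (hr ω h))
  -- integrand functions
  set F : ℝ → ℝ := fun ω => (1/2) * (Sn ω / Sy ω - Real.log (1 + Sn ω / Sy ω)) with hF
  set G : ℝ → ℝ := fun ω =>
    (1/2) * (star ω / Sy ω - Real.log (1 + star ω / Sy ω)) with hG
  have hSyne : ∀ ω ∈ Set.Icc 0 (2 * π), Sy ω ≠ 0 := fun ω h => ne_of_gt (hpos ω h)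
  have hstarnn : ∀ ω ∈ Set.Icc 0 (2 * π), 0 ≤ star ω := by
    intro ω h
    exact div_nonneg (mul_nonneg hζ.1.le (sq_nonneg _)) (hr ω h).le
  have hFc : ContinuousOn F (Set.Icc 0 (2 * π)) := by
    apply ContinuousOn.mul continuousOn_const
    apply ContinuousOn.sub (hSnc.div hSy hSyne)
    apply ContinuousOn.log (continuousOn_const.add (hSnc.div hSy hSyne))
    intro ω h
    have : 0 ≤ Sn ω / Sy ω := div_nonneg (hSnn ω h) (hpos ω h).le
    exact ne_of_gt (by show 0 < 1 + Sn ω / Sy ω; linarith)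
  have hGc : ContinuousOn G (Set.Icc 0 (2 * π)) := by
    apply ContinuousOn.mul continuousOn_const
    apply ContinuousOn.sub (hstarc.div hSy hSyne)
    apply ContinuousOn.log (continuousOn_const.add (hstarc.div hSy hSyne))
    intro ω h
    have : 0 ≤ star ω / Sy ω := div_nonneg (hstarnn ω h) (hpos ω h).le
    exact ne_of_gt (by show 0 < 1 + star ω / Sy ω; linarith)
  have hiF : IntervalIntegrable F MeasureTheory.volume 0 (2 * π) :=
    (hFc.mono (by rw [huIcc])).intervalIntegrable
  have hiG : IntervalIntegrable G MeasureTheory.volume 0 (2 * π) :=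
    (hGc.mono (by rw [huIcc])).intervalIntegrable
  have hiSn : IntervalIntegrable Sn MeasureTheory.volume 0 (2 * π) :=
    (hSnc.mono (by rw [huIcc])).intervalIntegrable
  have histar : IntervalIntegrable star MeasureTheory.volume 0 (2 * π) :=
    (hstarc.mono (by rw [huIcc])).intervalIntegrable
  -- pointwise inequality from convexity
  have hpt : ∀ ω ∈ Set.Icc 0 (2 * π),
      G ω + (ζ / 2) * (Sn ω - star ω) ≤ F ω := by
    intro ω h
    exact key14 (Sy ω) (Sn ω) ζ (hpos ω h) (hSnn ω h) (hzS ω h)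
  -- integrate
  have hmono : (∫ ω in (0:ℝ)..(2 * π), (G ω + (ζ / 2) * (Sn ω - star ω)))
      ≤ ∫ ω in (0:ℝ)..(2 * π), F ω := by
    apply intervalIntegral.integral_mono_on hT _ hiF hpt
    exact hiG.add ((hiSn.sub histar).const_mul (ζ / 2))
  have hsplit : (∫ ω in (0:ℝ)..(2 * π), (G ω + (ζ / 2) * (Sn ω - star ω)))
      = (∫ ω in (0:ℝ)..(2 * π), G ω)
        + (ζ / 2) * ((∫ ω in (0:ℝ)..(2 * π), Sn ω) - ∫ ω in (0:ℝ)..(2 * π), star ω) := by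
    rw [intervalIntegral.integral_add hiG ((hiSn.sub histar).const_mul (ζ / 2))]
    congr 1
    rw [intervalIntegral.integral_const_mul, intervalIntegral.integral_sub hiSn histar]
  -- the constraint values
  have hstarint : (∫ ω in (0:ℝ)..(2 * π), star ω) = 2 * π * D' := by
    have h2π : (2 * π) ≠ 0 := by positivity
    field_simp at hζeq
    linarith [hζeq]
  have hSnint : 2 * π * D' ≤ ∫ ω in (0:ℝ)..(2 * π), Sn ω := by
    have h2π : (0:ℝ) < 2 * π := by positivity
    rw [div_mul_eq_mul_div, le_div_iff₀ h2π, one_mul] at hSnD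
    linarith [hSnD]
  have hGF : (∫ ω in (0:ℝ)..(2 * π), G ω) ≤ ∫ ω in (0:ℝ)..(2 * π), F ω := by
    have hnn : 0 ≤ (ζ / 2) * ((∫ ω in (0:ℝ)..(2 * π), Sn ω) - ∫ ω in (0:ℝ)..(2 * π), star ω) := by
      apply mul_nonneg (by linarith [hζ.1])
      rw [hstarint]; linarith
    rw [hsplit] at hmono
    linarith
  have h2π : (0:ℝ) ≤ 1 / (2 * π) := by positivity
  exact mul_le_mul_of_nonneg_left hGF h2π
end
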